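/- Let F be a finite field of cardinality q, n a positive integer coprime to q, K a field extension of F containing a primitive n-th root of unity ζ, and γ ∈ ZMod n. Then the minimal polynomial of ζ^{γ̃} over F is a binomial (i.e., of the form X^k − c for some positive integer k and c ∈ F) if and only if the q-cyclotomic coset c_{n/q}(γ) is an equal-difference set, i.e., a coset of the additive subgroup of ZMod n generated by the image of some positive divisor d of n. -/
import Mathlib


open Polynomial

section AuxLemmas
open IntermediateField

private lemma aux_mem_range_of_pow_card' {F K : Type*} [Field F] [Fintype F] [Field K]
    [Algebra F K] {x : K} (h : x ^ Fintype.card F = x) :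
    ∃ c : F, algebraMap F K c = x := by
  classical
  set q := Fintype.card F with hqdef
  have hq2 : 1 < q := Fintype.one_lt_card
  set P : K[X] := X ^ q - X with hP
  have hPdeg : P.natDegree = q := by
    rw [hP, natDegree_sub_eq_left_of_natDegree_lt] <;>
      simp only [natDegree_X_pow, natDegree_X] <;> omega
  have hPne : P ≠ 0 := by
    intro h0; rw [h0, natDegree_zero] at hPdeg; omega
  have hroot : ∀ y : K, y ^ q = y → y ∈ P.roots.toFinset := by
    intro y hy
    rw [Multiset.mem_toFinset, mem_roots hPne]
    simp [hP, IsRoot, hy]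
  have himg : (Finset.univ.image (algebraMap F K)) ⊆ P.roots.toFinset := by
    intro y hy
    obtain ⟨c, -, rfl⟩ := Finset.mem_image.1 hy
    exact hroot _ (by rw [← map_pow, FiniteField.pow_card])
  have hcard : (Finset.univ.image (algebraMap F K)).card = q := by
    rw [Finset.card_image_of_injective _ (algebraMap F K).injective, Finset.card_univ]
  have hle : P.roots.toFinset.card ≤ q := by
    calc P.roots.toFinset.card ≤ Multiset.card P.roots := Multiset.toFinset_card_le _
    _ ≤ P.natDegree := P.card_roots'
    _ = q := hPdeg
  have heq : Finset.univ.image (algebraMap F K) = P.roots.toFinset :=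
    Finset.eq_of_subset_of_card_le himg (hcard ▸ hle)
  have hx : x ∈ P.roots.toFinset := hroot x h
  rw [← heq, Finset.mem_image] at hx
  obtain ⟨c, -, hc⟩ := hx
  exact ⟨c, hc⟩

private lemma aux_minpoly_natDegree' {F K : Type*} [Field F] [Fintype F] [Field K]
    [Algebra F K] {β : K} (hβ : IsIntegral F β) (m : ℕ) (hm : 0 < m)
    (hper : ∀ i : ℕ, β ^ Fintype.card F ^ i = β ↔ m ∣ i) :
    (minpoly F β).natDegree = m := by
  classical
  set q := Fintype.card F with hqdef
  have hq2 : 1 < q := Fintype.one_lt_card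
  set L := F⟮β⟯ with hL
  haveI : FiniteDimensional F L := adjoin.finiteDimensional hβ
  haveI : Finite L := Module.finite_of_finite F
  haveI : Fintype L := Fintype.ofFinite L
  set r := Module.finrank F L with hr
  have hdeg : (minpoly F β).natDegree = r := (adjoin.finrank hβ).symm
  have hcardL : Fintype.card L = q ^ r := Module.card_eq_pow_finrank
  set g : L := AdjoinSimple.gen F β with hg
  have hgK : (g : K) = β := rfl
  -- m ∣ r
  have h1 : β ^ q ^ r = β := by
    have := FiniteField.pow_card g
    rw [hcardL] at this
    have := congrArg (algebraMap L K) this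
    rwa [map_pow] at this
  have hmr : m ∣ r := (hper r).1 h1
  have hr0 : 0 < r := Module.finrank_pos
  -- r ≤ m : char
  set p := ringChar F with hp
  haveI : CharP F p := ringChar.charP F
  obtain ⟨f, hpprime, hqpf⟩ := FiniteField.card F p
  haveI : CharP L p := charP_of_injective_algebraMap (algebraMap F L).injective p
  haveI : ExpChar L p := ExpChar.prime hpprime
  set φr : L →+* L := iterateFrobenius L p ((f : ℕ) * m) with hφr
  have hφ : ∀ x : L, φr x = x ^ q ^ m := by
    intro x
    rw [hφr, iterateFrobenius_def, pow_mul, ← hqpf]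
  have hcomm : ∀ (c : F) (x : L), φr (c • x) = c • φr x := by
    intro c x
    rw [hφ, hφ, Algebra.smul_def, Algebra.smul_def, mul_pow, ← map_pow, FiniteField.pow_card_pow]
  set φ : L →ₐ[F] L := AlgHom.mk' φr hcomm with hφdef
  set T := AlgHom.equalizer φ (AlgHom.id F L) with hT
  have hgenT : g ∈ T := by
    rw [hT, AlgHom.mem_equalizer]
    show φr g = g
    rw [hφ]
    apply Subtype.coe_injective
    push_cast [hgK]
    exact (hper m).2 dvd_rfl
  have htop : T = ⊤ := by
    have h2 : Algebra.adjoin F ({g} : Set L) = ⊤ := by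
      have := (adjoin.powerBasis hβ).adjoin_gen_eq_top
      rwa [show (adjoin.powerBasis hβ).gen = g from rfl] at this
    exact le_antisymm le_top (h2 ▸ Algebra.adjoin_le (Set.singleton_subset_iff.2 hgenT))
  have hall : ∀ x : L, x ^ q ^ m = x := by
    intro x
    have hx : x ∈ T := htop ▸ Algebra.mem_top
    rw [hT, AlgHom.mem_equalizer] at hx
    have : φr x = x := hx
    rwa [hφ] at this
  -- counting
  have hcount : Fintype.card L ≤ q ^ m := by
    set P : L[X] := X ^ (q ^ m) - X with hP
    have hqm2 : 1 < q ^ m := Nat.one_lt_pow hm.ne' hq2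
    have hPdeg : P.natDegree = q ^ m := by
      rw [hP, natDegree_sub_eq_left_of_natDegree_lt] <;>
        simp only [natDegree_X_pow, natDegree_X] <;> omega
    have hPne : P ≠ 0 := by
      intro h0; rw [h0, natDegree_zero] at hPdeg; omega
    have huniv : (Finset.univ : Finset L) ⊆ P.roots.toFinset := by
      intro y _
      rw [Multiset.mem_toFinset, mem_roots hPne]
      simp [hP, IsRoot, hall y]
    calc Fintype.card L = (Finset.univ : Finset L).card := rfl
      _ ≤ P.roots.toFinset.card := Finset.card_le_card huniv
      _ ≤ Multiset.card P.roots := Multiset.toFinset_card_le _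
      _ ≤ P.natDegree := P.card_roots'
      _ = q ^ m := hPdeg
  rw [hcardL] at hcount
  have hrm : r ≤ m := (Nat.pow_le_pow_iff_right hq2).1 hcount
  rw [hdeg]
  exact le_antisymm hrm (Nat.le_of_dvd hr0 hmr)

end AuxLemmas

/-- Let `F` be a finite field of cardinality `q`, `n` coprime to `q`, `K ⊇ F`
containing a primitive `n`-th root of unity `ζ`, and `γ ∈ ZMod n`. Then the minimal polynomial
of `ζ^γ̃` over `F` is a binomial `X^k - c` (with `k > 0`, `c ∈ F`) iff the `q`-cyclotomic coset
`c_{n/q}(γ)` is an equal-difference set, i.e. a coset of the additive subgroup of `ZMod n`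
generated by the image of some positive divisor `d` of `n`. -/
theorem minpoly_binomial_iff_equal_difference_coset {F K : Type*} [Field F] [Fintype F]
    [Field K] [Algebra F K] (q : ℕ) (hq : Fintype.card F = q)
    (n : ℕ) (hn : 0 < n) (hco : Nat.Coprime n q)
    (ζ : K) (hζ : IsPrimitiveRoot ζ n) (γ : ZMod n) :
    (∃ k : ℕ, 0 < k ∧ ∃ c : F, minpoly F (ζ ^ γ.val) = X ^ k - C c) ↔
    (∃ d : ℕ, 0 < d ∧ d ∣ n ∧ ∃ γ₀ : ZMod n,
      {x : ZMod n | ∃ i : ℕ, x = γ * (q : ZMod n) ^ i} =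
        (γ₀ + ·) '' ((AddSubgroup.closure {((d : ZMod n))} :
          AddSubgroup (ZMod n)) : Set (ZMod n))) := by
  classical
  haveI : NeZero n := ⟨hn.ne'⟩
  set β : K := ζ ^ γ.val with hβdef
  have hq2 : 1 < q := hq ▸ Fintype.one_lt_card
  -- basic bridges
  have hzne : ζ ≠ 0 := hζ.ne_zero hn.ne'
  have hzeta : ∀ a b : ℕ, a ≤ b → (ζ ^ a = ζ ^ b ↔ ((a : ZMod n) = (b : ZMod n))) := by
    intro a b hab
    have hz : ζ ^ a ≠ 0 := pow_ne_zero _ hzne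
    rw [ZMod.natCast_eq_natCast_iff, Nat.modEq_iff_dvd' hab, ← hζ.pow_eq_one_iff_dvd]
    constructor
    · intro h
      apply mul_left_cancel₀ hz
      rw [mul_one, ← pow_add, Nat.add_sub_cancel' hab, h]
    · intro h
      rw [← Nat.add_sub_cancel' hab, pow_add, h, mul_one]
  have hvalcast : ((γ.val : ℕ) : ZMod n) = γ := by
    rw [ZMod.natCast_val, ZMod.cast_id]
  have hbeta_pow : ∀ i : ℕ, β ^ q ^ i = β ↔ γ * (q : ZMod n) ^ i = γ := by
    intro i
    have h1 : β ^ q ^ i = ζ ^ (γ.val * q ^ i) := by rw [hβdef, pow_mul]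
    have h2 : β = ζ ^ (γ.val * 1) := by rw [mul_one, hβdef]
    rw [h1, h2, eq_comm, hzeta _ _ (by nlinarith [Nat.one_le_two_pow (n := i), pow_pos (by omega : 0 < q) i] : γ.val * 1 ≤ γ.val * q ^ i), eq_comm]
    push_cast [hvalcast]
    rw [mul_one]
  have hβint : IsIntegral F β := by
    refine ⟨X ^ n - C 1, monic_X_pow_sub_C 1 hn.ne', ?_⟩
    have : β ^ n = 1 := by
      rw [hβdef, ← pow_mul, mul_comm, pow_mul, hζ.pow_eq_one, one_pow]
    simp [this]
  -- the unit q
  have hqunit : IsUnit ((q : ZMod n)) :=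
    ⟨ZMod.unitOfCoprime q hco.symm, ZMod.coe_unitOfCoprime q hco.symm⟩
  -- the minimal period m
  have hex : ∃ m : ℕ, 0 < m ∧ γ * (q : ZMod n) ^ m = γ := by
    obtain ⟨u, hu⟩ := hqunit
    refine ⟨orderOf u, orderOf_pos u, ?_⟩
    rw [← hu, ← Units.val_pow_eq_pow_val, pow_orderOf_eq_one, Units.val_one, mul_one]
  set m : ℕ := Nat.find hex with hmdef
  obtain ⟨hm0, hmfix⟩ : 0 < m ∧ γ * (q : ZMod n) ^ m = γ := Nat.find_spec hex
  have hshift : ∀ t r : ℕ, γ * (q : ZMod n) ^ (m * t + r) = γ * (q : ZMod n) ^ r := by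
    intro t
    induction t with
    | zero => simp
    | succ t ih =>
      intro r
      have h3 : m * (t + 1) + r = m * t + (r + m) := by ring
      rw [h3, ih (r + m), show r + m = m + r from Nat.add_comm r m, pow_add, ← mul_assoc, hmfix]
  have hperiod : ∀ i : ℕ, γ * (q : ZMod n) ^ i = γ ↔ m ∣ i := by
    intro i
    constructor
    · intro hi
      have h1 : γ * (q : ZMod n) ^ (i % m) = γ := by
        have h2 := hshift (i / m) (i % m)
        rw [Nat.div_add_mod] at h2
        rw [← h2, hi]
      have h2 : i % m = 0 := by
        by_contra h
        exact Nat.find_min hex (Nat.mod_lt i hm0) ⟨Nat.pos_of_ne_zero h, h1⟩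
      exact Nat.dvd_of_mod_eq_zero h2
    · rintro ⟨t, rfl⟩
      have := hshift t 0
      simpa using this
  -- s and its order
  set s : ZMod n := γ * (q : ZMod n) - γ with hsdef
  set n' : ℕ := addOrderOf s with hn'def
  have hn'pos : 0 < n' := addOrderOf_pos s
  haveI : NeZero n' := ⟨hn'pos.ne'⟩
  have hn'dvd : n' ∣ n := by
    have := addOrderOf_dvd_card (x := s)
    rwa [ZMod.card] at this
  set χ : ZMod n →+* ZMod n' := ZMod.castHom hn'dvd (ZMod n') with hχdef
  have hsz : ∀ x : ZMod n, s * x = 0 ↔ χ x = 0 := by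
    intro x
    have hx : ((x.val : ℕ) : ZMod n) = x := by rw [ZMod.natCast_val, ZMod.cast_id]
    rw [← hx, mul_comm s, ← nsmul_eq_mul, map_natCast χ, ZMod.natCast_eq_zero_iff]
    exact Iff.symm addOrderOf_dvd_iff_nsmul_eq_zero
  -- geometric sums
  set σ : ℕ → ZMod n := fun i => ∑ t ∈ Finset.range i, (q : ZMod n) ^ t with hσdef
  have hσ : ∀ i : ℕ, γ * (q : ZMod n) ^ i = γ + s * σ i := by
    intro i
    have h := geom_sum_mul ((q : ZMod n)) i
    have h2 : s * σ i = γ * ((q : ZMod n) ^ i - 1) := by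
      calc s * σ i = γ * (σ i * ((q : ZMod n) - 1)) := by rw [hsdef]; ring
        _ = γ * ((q : ZMod n) ^ i - 1) := by rw [hσdef]; rw [h]
    rw [h2]; ring
  have hcancel : ∀ (a b : ZMod n) (i : ℕ), a * (q : ZMod n) ^ i = b * (q : ZMod n) ^ i → a = b := by
    intro a b i hab
    exact (hqunit.pow i).mul_left_injective hab
  have hdiff : ∀ i j : ℕ, i ≤ j → (s * σ i = s * σ j ↔ m ∣ (j - i)) := by
    intro i j hij
    have h1 : γ * (q : ZMod n) ^ j = (γ * (q : ZMod n) ^ (j - i)) * (q : ZMod n) ^ i := by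
      rw [mul_assoc, ← pow_add, Nat.sub_add_cancel hij]
    constructor
    · intro h
      have h2 : γ * (q : ZMod n) ^ i = γ * (q : ZMod n) ^ j := by
        rw [hσ, hσ, h]
      rw [h1] at h2
      have h3 : γ = γ * (q : ZMod n) ^ (j - i) := hcancel _ _ i h2
      exact (hperiod _).1 h3.symm
    · intro h
      have h3 : γ * (q : ZMod n) ^ (j - i) = γ := (hperiod _).2 h
      have h2 : γ * (q : ZMod n) ^ i = γ * (q : ZMod n) ^ j := by
        rw [h1, h3]
      rw [hσ, hσ] at h2
      exact add_left_cancel h2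
  set ψ : ℕ → ZMod n' := fun i => χ (σ i) with hψdef
  have hψ : ∀ i j : ℕ, i ≤ j → (ψ i = ψ j ↔ m ∣ (j - i)) := by
    intro i j hij
    rw [← hdiff i j hij, hψdef]
    simp only
    rw [← sub_eq_zero, ← map_sub, ← hsz, mul_sub, sub_eq_zero, eq_comm]
  have hinj : ∀ i j : ℕ, i < m → j < m → ψ i = ψ j → i = j := by
    intro i j hi hj hij
    rcases le_total i j with h | h
    · have h2 := (hψ i j h).1 hij
      rcases Nat.eq_zero_of_dvd_of_lt h2 (by omega) with h3
      omega
    · have h2 := (hψ j i h).1 hij.symm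
      rcases Nat.eq_zero_of_dvd_of_lt h2 (by omega) with h3
      omega
  have hmn' : m ≤ n' := by
    have hcard := Fintype.card_le_of_injective (fun i : Fin m => ψ i)
      (fun i j hij => Fin.ext (hinj i j i.isLt j.isLt hij))
    simpa [ZMod.card] using hcard
  have hdegm : (minpoly F β).natDegree = m := by
    apply aux_minpoly_natDegree' hβint m hm0
    intro i
    rw [hq]
    exact (hbeta_pow i).trans (hperiod i)
  have hkey : β ^ (m * q) = β ^ m ↔ n' ∣ m := by
    have h1 : β ^ (m * q) = ζ ^ (γ.val * (m * q)) := by rw [hβdef, ← pow_mul]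
    have h2 : β ^ m = ζ ^ (γ.val * m) := by rw [hβdef, ← pow_mul]
    have hle : γ.val * m ≤ γ.val * (m * q) :=
      Nat.mul_le_mul_left _ (Nat.le_mul_of_pos_right m (by omega))
    rw [h1, h2, eq_comm, hzeta _ _ hle, hn'def, addOrderOf_dvd_iff_nsmul_eq_zero,
      nsmul_eq_mul, hsdef]
    push_cast [hvalcast]
    constructor
    · intro h
      linear_combination -h
    · intro h
      linear_combination -h
  have hLHS : (∃ k, 0 < k ∧ ∃ c : F, minpoly F β = X ^ k - C c) ↔ n' ∣ m := by
    constructor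
    · rintro ⟨k, hk, c, hmin⟩
      have hkm : k = m := by
        have h3 := hdegm
        rw [hmin, natDegree_X_pow_sub_C] at h3
        exact h3
      subst hkm
      have hb : β ^ m = algebraMap F K c := by
        have h0 := minpoly.aeval F β
        rw [hmin] at h0
        simpa [sub_eq_zero] using h0
      apply hkey.1
      rw [pow_mul, hb, ← map_pow, ← hq, FiniteField.pow_card]
    · intro hdvd
      have hfix : (β ^ m) ^ Fintype.card F = β ^ m := by
        rw [hq, ← pow_mul]
        exact hkey.2 hdvd
      obtain ⟨c, hc⟩ := aux_mem_range_of_pow_card' hfix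
      refine ⟨m, hm0, c, ?_⟩
      have hmonic1 : (minpoly F β).Monic := minpoly.monic hβint
      have hmonic2 : (X ^ m - C c : F[X]).Monic := monic_X_pow_sub_C c hm0.ne'
      have hdvd2 : minpoly F β ∣ X ^ m - C c := by
        apply minpoly.dvd
        rw [map_sub, map_pow, aeval_X, aeval_C, hc, sub_self]
      exact eq_of_monic_of_associated hmonic1 hmonic2
        (associated_of_dvd_of_natDegree_le hdvd2 hmonic2.ne_zero
          (by rw [natDegree_X_pow_sub_C, hdegm]))
  rw [hLHS]
  constructor
  · -- n' ∣ m → equal-difference coset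
    intro hdvd
    have hmn : m = n' := le_antisymm hmn' (Nat.le_of_dvd hm0 hdvd)
    have hsurj : ∀ y : ZMod n', ∃ i : ℕ, i < m ∧ ψ i = y := by
      have hbij : Function.Bijective (fun i : Fin m => ψ i) := by
        rw [Fintype.bijective_iff_injective_and_card]
        exact ⟨fun i j hij => Fin.ext (hinj i j i.isLt j.isLt hij),
          by simp [ZMod.card, hmn]⟩
      intro y
      obtain ⟨i, hi⟩ := hbij.2 y
      exact ⟨i, i.isLt, hi⟩
    refine ⟨n.gcd s.val, Nat.gcd_pos_of_pos_left _ hn, Nat.gcd_dvd_left _ _, γ, ?_⟩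
    set d : ℕ := n.gcd s.val with hddef
    have hsval : ((s.val : ℕ) : ZMod n) = s := by rw [ZMod.natCast_val, ZMod.cast_id]
    have hclos : AddSubgroup.closure {((d : ℕ) : ZMod n)} = AddSubgroup.closure {s} := by
      apply le_antisymm
      · rw [AddSubgroup.closure_le, Set.singleton_subset_iff, SetLike.mem_coe,
          AddSubgroup.mem_closure_singleton]
        refine ⟨Nat.gcdB n s.val, ?_⟩
        have hbez := Nat.gcd_eq_gcd_ab n s.val
        have h5 : (((n : ℤ) * Nat.gcdA n s.val + (s.val : ℤ) * Nat.gcdB n s.val : ℤ) :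
            ZMod n) = ((d : ℕ) : ZMod n) := by
          rw [← hbez]
          push_cast
          ring
        rw [← h5]
        push_cast
        rw [ZMod.natCast_self, hsval, zsmul_eq_mul]
        ring
      · rw [AddSubgroup.closure_le, Set.singleton_subset_iff, SetLike.mem_coe,
          AddSubgroup.mem_closure_singleton]
        refine ⟨((s.val / d : ℕ) : ℤ), ?_⟩
        have hdd : d ∣ s.val := Nat.gcd_dvd_right _ _
        have h6 : ((d * (s.val / d) : ℕ) : ZMod n) = s := by
          rw [Nat.mul_div_cancel' hdd, hsval]
        conv_rhs => rw [← h6]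
        rw [Nat.cast_mul, zsmul_eq_mul, Int.cast_natCast, mul_comm]
    rw [hclos]
    ext x
    simp only [Set.mem_setOf_eq, Set.mem_image, SetLike.mem_coe]
    constructor
    · rintro ⟨i, rfl⟩
      refine ⟨s * σ i, ?_, (hσ i).symm⟩
      rw [AddSubgroup.mem_closure_singleton]
      refine ⟨(((σ i).val : ℕ) : ℤ), ?_⟩
      rw [zsmul_eq_mul]
      push_cast
      rw [ZMod.natCast_val, ZMod.cast_id, mul_comm]
    · rintro ⟨y, hy, rfl⟩
      rw [AddSubgroup.mem_closure_singleton] at hy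
      obtain ⟨k, rfl⟩ := hy
      obtain ⟨i, him, hψi⟩ := hsurj ((k : ℤ) : ZMod n')
      refine ⟨i, ?_⟩
      show γ + k • s = γ * (q : ZMod n) ^ i
      rw [hσ i]
      congr 1
      have hχσ : (((σ i).val : ℕ) : ZMod n') = ((k : ℤ) : ZMod n') := by
        rw [← hψi, hψdef]
        simp only
        conv_rhs => rw [show σ i = (((σ i).val : ℕ) : ZMod n) from by
          rw [ZMod.natCast_val, ZMod.cast_id]]
        rw [map_natCast]
      have h9 : (((σ i).val : ℤ) - k) • s = 0 := by
        rw [← addOrderOf_dvd_iff_zsmul_eq_zero, ← ZMod.intCast_zmod_eq_zero_iff_dvd]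
        push_cast
        rw [sub_eq_zero]
        exact_mod_cast hχσ
      have h8 : s * σ i = (((σ i).val : ℕ) : ℤ) • s := by
        rw [zsmul_eq_mul]
        push_cast
        rw [ZMod.natCast_val, ZMod.cast_id, mul_comm]
      rw [sub_zsmul] at h9
      rw [add_neg_eq_zero] at h9
      rw [h8, h9]
  · -- coset → n' ∣ m
    rintro ⟨d, hd0, hdn, γ₀, hset⟩
    set H := AddSubgroup.closure {((d : ℕ) : ZMod n)} with hHdef
    have hγC : γ ∈ {x : ZMod n | ∃ i : ℕ, x = γ * (q : ZMod n) ^ i} := ⟨0, by simp⟩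
    have hγqC : γ * (q : ZMod n) ∈ {x : ZMod n | ∃ i : ℕ, x = γ * (q : ZMod n) ^ i} :=
      ⟨1, by simp⟩
    rw [hset] at hγC hγqC
    obtain ⟨h₁, hh₁, he₁⟩ := hγC
    obtain ⟨h₂, hh₂, he₂⟩ := hγqC
    have hsH : s ∈ H := by
      have h3 : s = h₂ - h₁ := by
        dsimp only at he₁ he₂
        rw [hsdef, ← he₂, ← he₁]
        ring
      rw [h3]
      exact sub_mem hh₂ hh₁
    have h9 : AddSubgroup.closure {s} ≤ H :=
      (AddSubgroup.closure_le _).2 (Set.singleton_subset_iff.2 hsH)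
    have h10 : n' = Nat.card (AddSubgroup.closure {s}) := by
      rw [← AddSubgroup.zmultiples_eq_closure, Nat.card_zmultiples]
    have h11 : n' ∣ Nat.card H := h10 ▸ AddSubgroup.card_dvd_of_le h9
    have hbij : Function.Bijective (fun i : Fin m =>
        (⟨γ * (q : ZMod n) ^ (i : ℕ), ⟨(i : ℕ), rfl⟩⟩ :
          {x : ZMod n | ∃ i : ℕ, x = γ * (q : ZMod n) ^ i})) := by
      constructor
      · intro i j hij
        have h12 : γ * (q : ZMod n) ^ (i : ℕ) = γ * (q : ZMod n) ^ (j : ℕ) :=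
          congrArg Subtype.val hij
        rw [hσ, hσ] at h12
        have h13 : s * σ (i : ℕ) = s * σ (j : ℕ) := add_left_cancel h12
        apply Fin.ext
        rcases le_total (i : ℕ) (j : ℕ) with h | h
        · have h14 := (hdiff _ _ h).1 h13
          have h15 := Nat.eq_zero_of_dvd_of_lt h14 (by omega)
          omega
        · have h14 := (hdiff _ _ h).1 h13.symm
          have h15 := Nat.eq_zero_of_dvd_of_lt h14 (by omega)
          omega
      · rintro ⟨x, i, rfl⟩
        refine ⟨⟨i % m, Nat.mod_lt i hm0⟩, ?_⟩
        apply Subtype.ext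
        show γ * (q : ZMod n) ^ (i % m) = γ * (q : ZMod n) ^ i
        conv_rhs => rw [← Nat.div_add_mod i m]
        rw [hshift]
    have h13 : Nat.card {x : ZMod n | ∃ i : ℕ, x = γ * (q : ZMod n) ^ i} = m := by
      rw [← Nat.card_eq_of_bijective _ hbij, Nat.card_eq_fintype_card, Fintype.card_fin]
    rw [hset] at h13
    have h14 : Nat.card ((γ₀ + ·) '' (H : Set (ZMod n))) = Nat.card H := by
      rw [Nat.card_coe_set_eq, Set.ncard_image_of_injective _ (add_right_injective γ₀),
        ← Nat.card_coe_set_eq, SetLike.coe_sort_coe]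
    rw [h14] at h13
    exact h13 ▸ h11
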